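/- arXiv:math/0502269 — 3 statements merged into one kernel-verified Lean document; each statement's English description precedes it below -/
import Mathlib

section
/- Let (W,S) be a Coxeter system and let s,t ∈ S. Then s is conjugate to t in W if and only if there exists a sequence s_1, …, s_n of elements of S such that s_1 = s, s_n = t, and m(s_i, s_{i+1}) is odd for each i ∈ {1, …, n−1}. -/
/-!
In Mathlib's `CoxeterMatrix`, the entry `M i j : ℕ` is the order of `s i * s j`,
with `0` encoding the order `∞` (and `0` is not odd).
-/

private lemma isConj_simple_of_odd {B W : Type*} [Group W] {M : CoxeterMatrix B}
    (cs : CoxeterSystem M W) {a b : B} (h : Odd (M a b)) :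
    IsConj (cs.simple a) (cs.simple b) := by
  obtain ⟨k, hk⟩ := h
  set s := cs.simple a with hs_def
  set t := cs.simple b with ht_def
  have hs : s * s = 1 := cs.simple_mul_simple_self a
  have ht : t * t = 1 := cs.simple_mul_simple_self b
  have hsinv : s⁻¹ = s := inv_eq_of_mul_eq_one_right hs
  have htinv : t⁻¹ = t := inv_eq_of_mul_eq_one_right ht
  set x := s * t with hx_def
  have hx : x ^ (2 * k + 1) = 1 := by rw [← hk]; exact cs.simple_mul_simple_pow a b
  have hxinv : x⁻¹ = t * s := by rw [hx_def, mul_inv_rev, hsinv, htinv]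
  have h1 : SemiconjBy s x⁻¹ x := by
    rw [SemiconjBy, hxinv, hx_def]; group
  have h2 : SemiconjBy s (x⁻¹ ^ k) (x ^ k) := h1.pow_right k
  rw [isConj_iff]
  refine ⟨x ^ k, ?_⟩
  have h2' : s * x⁻¹ ^ k = x ^ k * s := h2
  calc x ^ k * s * (x ^ k)⁻¹ = x ^ k * (s * x⁻¹ ^ k) := by rw [inv_pow, mul_assoc]
    _ = x ^ k * (x ^ k * s) := by rw [h2']
    _ = x ^ (2 * k) * s := by rw [← mul_assoc, ← pow_add]; ring_nf
    _ = x⁻¹ * s := by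
        have h3 : x ^ (2 * k) = x⁻¹ := by
          rw [eq_inv_iff_mul_eq_one, ← pow_succ]; exact hx
        rw [h3]
    _ = t := by rw [hxinv, mul_assoc, hs, mul_one]

private lemma chain_of_reflTransGen {B : Type*} {R : B → B → Prop} {i j : B}
    (h : Relation.ReflTransGen R i j) :
    ∃ (n : ℕ) (f : Fin (n + 1) → B), f 0 = i ∧ f (Fin.last n) = j ∧
      ∀ k : Fin n, R (f k.castSucc) (f k.succ) := by
  induction h with
  | refl => exact ⟨0, fun _ => i, rfl, rfl, fun k => k.elim0⟩
  | @tail b c hab hbc ih =>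
    obtain ⟨n, f, h0, hl, hc⟩ := ih
    refine ⟨n + 1, Fin.snoc f c, ?_, ?_, ?_⟩
    · rw [show (0 : Fin (n + 2)) = Fin.castSucc 0 from rfl, Fin.snoc_castSucc]; exact h0
    · rw [Fin.snoc_last]
    · intro k
      refine Fin.lastCases ?_ ?_ k
      · rw [Fin.succ_last, Fin.snoc_last, Fin.snoc_castSucc, hl]
        exact hbc
      · intro k'
        rw [Fin.succ_castSucc, Fin.snoc_castSucc, Fin.snoc_castSucc]
        exact hc k'

private lemma isConj_of_chain {B W : Type*} [Group W] {M : CoxeterMatrix B}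
    (cs : CoxeterSystem M W) :
    ∀ (n : ℕ) (f : Fin (n + 1) → B),
      (∀ k : Fin n, Odd (M (f k.castSucc) (f k.succ))) →
      IsConj (cs.simple (f 0)) (cs.simple (f (Fin.last n))) := by
  intro n
  induction n with
  | zero => intro f _; exact IsConj.refl _
  | succ n ih =>
    intro f hc
    have step : IsConj (cs.simple (f (Fin.last n).castSucc))
        (cs.simple (f (Fin.last (n + 1)))) := by
      rw [← Fin.succ_last]
      exact isConj_simple_of_odd cs (hc (Fin.last n))
    have prev := ih (f ∘ Fin.castSucc) (fun k => by
      have := hc k.castSucc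
      rwa [Fin.succ_castSucc] at this)
    exact prev.trans step

/-- Two simple reflections `s`, `t` of a Coxeter system `(W, S)` are conjugate in `W` if and
only if there is a sequence `s₁, …, sₙ` of elements of `S` with `s₁ = s`, `sₙ = t`, and
`m (sᵢ, sᵢ₊₁)` odd for all `i ∈ {1, …, n - 1}`. -/
theorem isConj_simple_iff_odd_chain {B W : Type*} [Group W] [Finite B]
    {M : CoxeterMatrix B} (cs : CoxeterSystem M W) (i j : B) :
    IsConj (cs.simple i) (cs.simple j) ↔
      ∃ (n : ℕ) (f : Fin (n + 1) → B), f 0 = i ∧ f (Fin.last n) = j ∧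
        ∀ k : Fin n, Odd (M (f k.castSucc) (f k.succ)) := by
  classical
  set R : B → B → Prop := fun a b => Odd (M a b) with hR
  constructor
  · intro hconj
    set g : B → Multiplicative (ZMod 2) := fun b =>
      if Relation.ReflTransGen R i b then Multiplicative.ofAdd 1 else 1 with hg
    have hsq : ∀ z : Multiplicative (ZMod 2), z * z = 1 := by decide
    have hlift : CoxeterMatrix.IsLiftable M g := by
      intro a b
      rcases Nat.even_or_odd (M a b) with he | ho
      · obtain ⟨m, hm⟩ := he
        rw [hm, show m + m = 2 * m by ring, pow_mul, pow_two, hsq, one_pow]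
      · have hab : g a = g b := by
          have hRab : R a b := ho
          have hRba : R b a := by
            show Odd (M b a); rwa [M.symmetric b a]
          simp only [hg]
          by_cases hia : Relation.ReflTransGen R i a
          · rw [if_pos hia, if_pos (hia.tail hRab)]
          · rw [if_neg hia, if_neg (fun hib => hia (hib.tail hRba))]
        rw [hab, hsq, one_pow]
    have heq : g i = g j := by
      obtain ⟨u, hu⟩ := hconj
      have hu' : (u : W) * cs.simple i = cs.simple j * (u : W) := hu
      have := congrArg (cs.lift ⟨g, hlift⟩) hu'
      rw [map_mul, map_mul, cs.lift_apply_simple hlift, cs.lift_apply_simple hlift,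
        mul_comm (g j)] at this
      exact mul_left_cancel this
    have hgi : g i = Multiplicative.ofAdd 1 := by
      simp only [hg]; rw [if_pos Relation.ReflTransGen.refl]
    have hchain : Relation.ReflTransGen R i j := by
      by_contra hcon
      rw [hgi] at heq
      simp only [hg] at heq
      rw [if_neg hcon] at heq
      exact absurd heq.symm (by decide)
    exact chain_of_reflTransGen hchain
  · rintro ⟨n, f, h0, hl, hc⟩
    rw [← h0, ← hl]
    exact isConj_of_chain cs n f hc
end

section
/- Let (W,S) and (W,S') be Coxeter systems on the same group W. If the set R_S of all reflections of (W,S) equals the set R_{S'} of all reflections of (W,S'), then |S| = |S'|. -/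
open Real Matrix

set_option linter.unusedSectionVars false
set_option maxHeartbeats 1000000

section CoxRank

lemma psq (c : ℝ) :
    (!![(-1 : ℝ), -(2*c); 2*c, 4*c^2 - 1]) ^ 2
      = (4*c^2 - 2) • (!![(-1 : ℝ), -(2*c); 2*c, 4*c^2 - 1]) + (-1 : ℝ) • 1 := by
  ext i j
  fin_cases i <;> fin_cases j <;>
    simp [pow_two, Matrix.mul_apply, Fin.sum_univ_two, Matrix.one_apply] <;> ring

lemma Pmat_pow (m : ℕ) (hm : 2 ≤ m) :
    (!![(-1 : ℝ), -(2 * Real.cos (π / m)); 2 * Real.cos (π / m),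
        4 * Real.cos (π / m) ^ 2 - 1]) ^ m = 1 := by
  have hm0 : (m : ℝ) ≠ 0 := by positivity
  rcases eq_or_lt_of_le hm with h2 | h3
  · -- m = 2
    subst h2
    have : Real.cos (π / (2 : ℕ)) = 0 := by
      norm_num [Real.cos_pi_div_two]
    rw [this]
    ext i j
    fin_cases i <;> fin_cases j <;>
      simp [pow_two, Matrix.mul_apply, Fin.sum_univ_two, Matrix.one_apply]
  · -- m ≥ 3
    set θ := π / m with hθ
    set c := Real.cos θ with hc
    set s := Real.sin (2 * θ) with hs
    have hθpos : 0 < θ := by positivity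
    have hθlt : 2 * θ < π := by
      have e : 2 * θ = 2 * π / ↑m := by rw [hθ]; ring
      rw [e, div_lt_iff₀ (by positivity : (0:ℝ) < m)]
      have hm2 : (2:ℝ) < m := by exact_mod_cast h3
      nlinarith [mul_pos Real.pi_pos (sub_pos.mpr hm2)]
    have hspos : 0 < s := Real.sin_pos_of_pos_of_lt_pi (by linarith) hθlt
    have hsne : s ≠ 0 := ne_of_gt hspos
    set P := (!![(-1 : ℝ), -(2*c); 2*c, 4*c^2 - 1]) with hP
    have key : ∀ n : ℕ, P ^ n
        = (Real.sin (2*n*θ) / s) • P + (- Real.sin (2*((n:ℝ)-1)*θ) / s) • 1 := by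
      intro n
      induction n with
      | zero =>
        simp only [Nat.cast_zero, pow_zero]
        rw [show (2:ℝ)*0*θ = 0 by ring, show (2:ℝ)*((0:ℝ)-1)*θ = -(2*θ) by ring]
        rw [Real.sin_zero, Real.sin_neg]
        rw [← hs]
        field_simp
        simp
      | succ n ih =>
        have hPsq : P * P = (4*c^2 - 2) • P + (-1 : ℝ) • 1 := by
          have := psq c; rwa [pow_two] at this
        rw [pow_succ, ih]
        rw [add_mul, smul_mul_assoc, smul_mul_assoc, one_mul, hPsq]
        have hcos2 : 4*c^2 - 2 = 2 * Real.cos (2*θ) := by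
          rw [Real.cos_two_mul]; ring
        have hsin1 : Real.sin (2*((n:ℝ)+1)*θ)
            = Real.sin (2*n*θ) * Real.cos (2*θ) + Real.cos (2*n*θ) * Real.sin (2*θ) := by
          rw [show (2:ℝ)*((n:ℝ)+1)*θ = 2*n*θ + 2*θ by ring, Real.sin_add]
        have hsin2 : Real.sin (2*((n:ℝ)-1)*θ)
            = Real.sin (2*n*θ) * Real.cos (2*θ) - Real.cos (2*n*θ) * Real.sin (2*θ) := by
          rw [show (2:ℝ)*((n:ℝ)-1)*θ = 2*n*θ - 2*θ by ring, Real.sin_sub]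
        push_cast
        rw [show ((n:ℝ)+1-1) = (n:ℝ) by ring]
        rw [smul_add, smul_smul, smul_smul, hsin1, hcos2]
        rw [hsin2]
        rw [← hs]
        ext i j
        simp only [Matrix.add_apply, Matrix.smul_apply, smul_eq_mul]
        field_simp
        ring
    have h1 : Real.sin (2*(m:ℝ)*θ) = 0 := by
      rw [hθ, show (2:ℝ)*(m:ℝ)*(π/m) = 2*π by field_simp]
      exact Real.sin_two_pi
    have h2' : Real.sin (2*((m:ℝ)-1)*θ) = -s := by
      rw [hs, show (2:ℝ)*((m:ℝ)-1)*θ = 2*(m:ℝ)*θ - 2*θ by ring, Real.sin_sub, h1]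
      have h2m : Real.cos (2*(m:ℝ)*θ) = 1 := by
        rw [hθ, show (2:ℝ)*(m:ℝ)*(π/m) = 2*π by field_simp]
        exact Real.cos_two_pi
      rw [h2m]; ring
    rw [key m, h1, h2', zero_div, zero_smul, zero_add, neg_neg, div_self hsne, one_smul]

lemma end_pow_eq_one {V : Type*} [AddCommGroup V] [Module ℝ V]
    (L : V →ₗ[ℝ] (Fin 2 → ℝ)) (E : (Fin 2 → ℝ) →ₗ[ℝ] V)
    (G Gi : Matrix (Fin 2) (Fin 2) ℝ) (hGiG : Gi * G = 1) (hGGi : G * Gi = 1)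
    (hLE : L ∘ₗ E = Matrix.toLin' G)
    (Xi Xj : Matrix (Fin 2) (Fin 2) ℝ) (m : ℕ)
    (hP : ((1 + G * Xi) * (1 + G * Xj)) ^ m = 1) :
    ((1 + E ∘ₗ Matrix.toLin' Xi ∘ₗ L) * (1 + E ∘ₗ Matrix.toLin' Xj ∘ₗ L) :
      Module.End ℝ V) ^ m = 1 := by
  set H : Matrix (Fin 2) (Fin 2) ℝ → Module.End ℝ V :=
    fun Y => 1 + E ∘ₗ Matrix.toLin' (Gi * (Y - 1)) ∘ₗ L with hH
  have key : ∀ X : Matrix (Fin 2) (Fin 2) ℝ,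
      (1 + E ∘ₗ Matrix.toLin' X ∘ₗ L : Module.End ℝ V) = H (1 + G * X) := by
    intro X
    have h1 : Gi * ((1 + G * X) - 1) = X := by
      rw [add_sub_cancel_left, ← mul_assoc, hGiG, one_mul]
    rw [hH]
    simp only [h1]
  have hone : H 1 = 1 := by
    rw [hH]; simp
  have hmul : ∀ Y Z, H Y * H Z = H (Y * Z) := by
    intro Y Z
    have expand : H Y * H Z
        = 1 + ((E ∘ₗ Matrix.toLin' (Gi * (Y - 1)) ∘ₗ L)
            + (E ∘ₗ Matrix.toLin' (Gi * (Z - 1)) ∘ₗ L)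
            + (E ∘ₗ Matrix.toLin' (Gi * (Y - 1)) ∘ₗ L) * (E ∘ₗ Matrix.toLin' (Gi * (Z - 1)) ∘ₗ L)) := by
      rw [hH]
      noncomm_ring
    have hab : (E ∘ₗ Matrix.toLin' (Gi * (Y - 1)) ∘ₗ L) * (E ∘ₗ Matrix.toLin' (Gi * (Z - 1)) ∘ₗ L)
        = E ∘ₗ Matrix.toLin' ((Gi * (Y - 1)) * G * (Gi * (Z - 1))) ∘ₗ L := by
      have hLE' : ∀ x, L (E x) = Matrix.toLin' G x := fun x => by
        rw [← LinearMap.comp_apply, hLE]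
      rw [Module.End.mul_eq_comp]
      ext v
      simp only [LinearMap.comp_apply, hLE', Matrix.toLin'_apply, Matrix.mulVec_mulVec]
      congr 1
      noncomm_ring
    have hmat : Gi * (Y - 1) + Gi * (Z - 1) + (Gi * (Y - 1)) * G * (Gi * (Z - 1))
        = Gi * (Y * Z - 1) := by
      have h2 : (Gi * (Y - 1)) * G * (Gi * (Z - 1)) = Gi * ((Y - 1) * (Z - 1)) := by
        calc (Gi * (Y - 1)) * G * (Gi * (Z - 1)) = Gi * ((Y - 1) * (G * Gi) * (Z - 1)) := by
              noncomm_ring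
          _ = Gi * ((Y - 1) * (Z - 1)) := by rw [hGGi]; noncomm_ring
      rw [h2]
      noncomm_ring
    have merge : ∀ (A₁ A₂ A₃ : Matrix (Fin 2) (Fin 2) ℝ),
        (E ∘ₗ Matrix.toLin' A₁ ∘ₗ L) + (E ∘ₗ Matrix.toLin' A₂ ∘ₗ L)
          + (E ∘ₗ Matrix.toLin' A₃ ∘ₗ L) = E ∘ₗ Matrix.toLin' (A₁ + A₂ + A₃) ∘ₗ L := by
      intro A₁ A₂ A₃
      ext v
      simp only [LinearMap.add_apply, LinearMap.comp_apply, Matrix.toLin'_apply, Matrix.add_mulVec, map_add]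
    rw [expand, hab, merge, hmat, hH]
  have hpow : ∀ (Y : Matrix (Fin 2) (Fin 2) ℝ) (n : ℕ), (H Y) ^ n = H (Y ^ n) := by
    intro Y n
    induction n with
    | zero => simp [hone]
    | succ n ih => rw [pow_succ, pow_succ, ih, hmul]
  rw [key Xi, key Xj, hmul, hpow, hP, hone]



variable {B : Type*} [Fintype B] [DecidableEq B] (M : CoxeterMatrix B)

/-- entries of the Tits form -/
noncomputable def kk (i j : B) : ℝ := - Real.cos (π / (M i j : ℝ))

lemma kk_self (i : B) : kk M i i = 1 := by
  simp [kk, M.diagonal i]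

lemma kk_symm (i j : B) : kk M i j = kk M j i := by
  rw [kk, kk, M.symmetric i j]

/-- the linear functional `v ↦ ∑ j, kk i j * v j` -/
noncomputable def ff (i : B) : (B → ℝ) →ₗ[ℝ] ℝ :=
  ∑ j, kk M i j • (LinearMap.proj j : ((B → ℝ) →ₗ[ℝ] ℝ))

lemma ff_apply (i : B) (v : B → ℝ) : ff M i v = ∑ j, kk M i j * v j := by
  simp [ff]

lemma ff_single (i j : B) : ff M i (Pi.single j 1) = kk M i j := by
  rw [ff_apply]
  rw [Finset.sum_eq_single j]
  · simp
  · intro l _ hl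
    simp [Pi.single_apply, hl]
  · simp

/-- simple root -/
def ee (i : B) : B → ℝ := Pi.single i 1

/-- the simple reflection acting on `B → ℝ` -/
noncomputable def sig (i : B) : Module.End ℝ (B → ℝ) :=
  LinearMap.id - (2 : ℝ) • (ff M i).smulRight (ee i)

lemma sig_apply (i : B) (v : B → ℝ) : sig M i v = v - (2 * ff M i v) • ee i := by
  simp [sig, LinearMap.smulRight, mul_smul]


variable {B : Type*} [Fintype B] [DecidableEq B] (M : CoxeterMatrix B)

lemma sig_isLiftable : M.IsLiftable (sig M) := by
  intro i j
  rcases eq_or_ne i j with rfl | hij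
  · rw [M.diagonal i, pow_one]
    apply LinearMap.ext
    intro v
    have h1 : ff M i (ee i) = 1 := by rw [ee, ff_single, kk_self]
    rw [Module.End.mul_apply, sig_apply, sig_apply, map_sub, _root_.map_smul, h1]
    simp only [smul_eq_mul, Module.End.one_apply]
    module
  · set m := M i j with hm
    rcases Nat.eq_zero_or_pos m with h0 | hpos
    · rw [h0, pow_zero]
    · have hm1 : m ≠ 1 := M.off_diagonal i j hij
      have hm2 : 2 ≤ m := by omega
      set c := Real.cos (π / (m : ℝ)) with hc
      have hπm : 0 < π / (m : ℝ) := by positivity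
      have hπm' : π / (m : ℝ) < π := by
        apply div_lt_self Real.pi_pos
        exact_mod_cast (by omega : 1 < m)
      have hsin : 0 < Real.sin (π / (m : ℝ)) := Real.sin_pos_of_pos_of_lt_pi hπm hπm'
      have hc2 : c ^ 2 < 1 := by nlinarith [Real.sin_sq_add_cos_sq (π / (m : ℝ))]
      have h1c : (1 : ℝ) - c ^ 2 ≠ 0 := by nlinarith
      set G : Matrix (Fin 2) (Fin 2) ℝ := !![1, -c; -c, 1] with hG
      set Gi : Matrix (Fin 2) (Fin 2) ℝ := (1 / (1 - c ^ 2)) • !![1, c; c, 1] with hGi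
      have hGiG : Gi * G = 1 := by
        ext a b
        fin_cases a <;> fin_cases b <;>
          simp [hG, hGi, Matrix.mul_apply, Fin.sum_univ_two, Matrix.one_apply] <;>
          field_simp <;> ring
      have hGGi : G * Gi = 1 := by
        ext a b
        fin_cases a <;> fin_cases b <;>
          simp [hG, hGi, Matrix.mul_apply, Fin.sum_univ_two, Matrix.one_apply] <;>
          field_simp <;> ring
      set L : (B → ℝ) →ₗ[ℝ] (Fin 2 → ℝ) := LinearMap.pi ![ff M i, ff M j] with hL
      set E : (Fin 2 → ℝ) →ₗ[ℝ] (B → ℝ) :=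
        (LinearMap.proj (0 : Fin 2) : ((Fin 2 → ℝ) →ₗ[ℝ] ℝ)).smulRight (ee i)
          + (LinearMap.proj (1 : Fin 2) : ((Fin 2 → ℝ) →ₗ[ℝ] ℝ)).smulRight (ee j) with hE
      have hkii : ff M i (ee i) = 1 := by rw [ee, ff_single, kk_self]
      have hkjj : ff M j (ee j) = 1 := by rw [ee, ff_single, kk_self]
      have hkij : ff M i (ee j) = -c := by rw [ee, ff_single, kk, ← hm, hc]
      have hkji : ff M j (ee i) = -c := by rw [ee, ff_single, ← kk_symm, kk, ← hm, hc]
      have hLE : L ∘ₗ E = Matrix.toLin' G := by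
        apply LinearMap.ext
        intro x
        funext k
        fin_cases k <;>
          simp [hL, hE, LinearMap.pi_apply, Matrix.toLin'_apply, Matrix.mulVec,
            dotProduct, Fin.sum_univ_two, map_add, _root_.map_smul, hkii, hkjj, hkij, hkji,
            hG, smul_eq_mul] <;> ring
      have hsig_i : sig M i = 1 + E ∘ₗ Matrix.toLin' (!![(-2 : ℝ), 0; 0, 0]) ∘ₗ L := by
        apply LinearMap.ext
        intro v
        rw [sig_apply]
        simp [hE, hL, Matrix.toLin'_apply, Matrix.mulVec, dotProduct, Fin.sum_univ_two,
          LinearMap.pi_apply]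
        module
      have hsig_j : sig M j = 1 + E ∘ₗ Matrix.toLin' (!![(0 : ℝ), 0; 0, -2]) ∘ₗ L := by
        apply LinearMap.ext
        intro v
        rw [sig_apply]
        simp [hE, hL, Matrix.toLin'_apply, Matrix.mulVec, dotProduct, Fin.sum_univ_two,
          LinearMap.pi_apply]
        module
      have hPmat : ((1 + G * !![(-2 : ℝ), 0; 0, 0]) * (1 + G * !![(0 : ℝ), 0; 0, -2]))
          = !![(-1 : ℝ), -(2 * c); 2 * c, 4 * c ^ 2 - 1] := by
        ext a b
        fin_cases a <;> fin_cases b <;>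
          simp [hG, Matrix.mul_apply, Fin.sum_univ_two, Matrix.one_apply] <;> ring
      rw [hsig_i, hsig_j]
      apply end_pow_eq_one L E G Gi hGiG hGGi hLE
      rw [hPmat, hc]
      exact Pmat_pow m hm2

lemma card_le_of_reflections {W : Type*} [Group W] (cs : CoxeterSystem M W)
    {ι : Type*} [Fintype ι] (t : ι → W) (ht : ∀ i, cs.IsReflection (t i))
    (hgen : Subgroup.closure (Set.range t) = ⊤) :
    Fintype.card B ≤ Fintype.card ι := by
  let ρ : W →* Module.End ℝ (B → ℝ) := cs.lift ⟨sig M, sig_isLiftable M⟩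
  have hρs : ∀ bb, ρ (cs.simple bb) = sig M bb := fun bb => cs.lift_apply_simple _ bb
  choose w b hw using ht
  set v : ι → (B → ℝ) := fun i => ρ (w i) (ee (b i)) with hv
  set U := Submodule.span ℝ (Set.range v) with hU
  have hρinv : ∀ (g : W) (x : B → ℝ), ρ g (ρ g⁻¹ x) = x := by
    intro g x
    have h1 : ρ g * ρ g⁻¹ = 1 := by rw [← _root_.map_mul, mul_inv_cancel, _root_.map_one]
    calc ρ g (ρ g⁻¹ x) = (ρ g * ρ g⁻¹) x := rfl
      _ = x := by rw [h1]; rfl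
  have hrefl : ∀ i x, ρ (t i) x - x ∈ U := by
    intro i x
    have hx : ρ (t i) x = x - (2 * ff M (b i) (ρ (w i)⁻¹ x)) • v i := by
      rw [hw i, _root_.map_mul, _root_.map_mul]
      have e1 : (ρ (w i) * ρ (cs.simple (b i)) * ρ ((w i)⁻¹)) x
          = ρ (w i) (ρ (cs.simple (b i)) (ρ ((w i)⁻¹) x)) := rfl
      rw [e1, hρs, sig_apply, map_sub, _root_.map_smul, hρinv]
    rw [hx]
    have e2 : x - (2 * ff M (b i) (ρ (w i)⁻¹ x)) • v i - x
        = (-(2 * ff M (b i) (ρ (w i)⁻¹ x))) • v i := by module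
    rw [e2]
    exact U.smul_mem _ (Submodule.subset_span ⟨i, rfl⟩)
  let K : Subgroup W :=
    { carrier := {g | ∀ x, ρ g x - x ∈ U}
      one_mem' := by intro x; simp
      mul_mem' := by
        intro a b' ha hb x
        have h1 := ha (ρ b' x)
        have h2 := hb x
        have e : ρ (a * b') x - x = (ρ a (ρ b' x) - ρ b' x) + (ρ b' x - x) := by
          rw [_root_.map_mul]
          have : (ρ a * ρ b') x = ρ a (ρ b' x) := rfl
          rw [this]; abel
        rw [e]; exact U.add_mem h1 h2
      inv_mem' := by
        intro a ha x
        have h1 := ha (ρ a⁻¹ x)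
        rw [hρinv] at h1
        have e : ρ a⁻¹ x - x = -(x - ρ a⁻¹ x) := by abel
        rw [e]; exact U.neg_mem h1 }
  have htop : ∀ g : W, ∀ x, ρ g x - x ∈ U := by
    intro g
    have hle : Subgroup.closure (Set.range t) ≤ K := by
      rw [Subgroup.closure_le]
      rintro _ ⟨i, rfl⟩
      exact hrefl i
    exact hle (hgen ▸ Subgroup.mem_top g)
  have hee : ∀ bb : B, ee bb ∈ U := by
    intro bb
    have h1 := htop (cs.simple bb) (ee bb)
    rw [hρs, sig_apply] at h1
    have hkbb : ff M bb (ee bb) = 1 := by rw [ee, ff_single, kk_self]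
    rw [hkbb] at h1
    have e : ee bb - (2 * 1 : ℝ) • ee bb - ee bb = (-2 : ℝ) • ee bb := by module
    rw [e] at h1
    have h2 := U.smul_mem (-1/2 : ℝ) h1
    rw [smul_smul] at h2
    norm_num at h2
    exact h2
  have hspan : U = ⊤ := by
    rw [eq_top_iff, ← (Pi.basisFun ℝ B).span_eq]
    apply Submodule.span_le.mpr
    rintro _ ⟨bb, rfl⟩
    rw [Pi.basisFun_apply]
    exact hee bb
  have hfr := finrank_le_of_span_eq_top (hU.symm.trans hspan)
  simpa [Module.finrank_pi] using hfr

lemma card_le_main {B B' W : Type*} [Group W] [Finite B] [Finite B']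
    {M : CoxeterMatrix B} {M' : CoxeterMatrix B'}
    (cs : CoxeterSystem M W) (cs' : CoxeterSystem M' W)
    (h : ∀ w : W, cs'.IsReflection w → cs.IsReflection w) :
    Nat.card B ≤ Nat.card B' := by
  cases nonempty_fintype B
  cases nonempty_fintype B'
  classical
  rw [Nat.card_eq_fintype_card, Nat.card_eq_fintype_card]
  exact card_le_of_reflections M cs cs'.simple
    (fun i => h _ (cs'.isReflection_simple i)) cs'.subgroup_closure_range_simple

end CoxRank

/-- If `(W, S)` and `(W, S')` are Coxeter systems on the same group `W` whose sets of
reflections coincide, then `|S| = |S'|`. -/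
theorem card_eq_of_reflections_eq {B B' W : Type*} [Group W] [Finite B] [Finite B']
    {M : CoxeterMatrix B} {M' : CoxeterMatrix B'}
    (cs : CoxeterSystem M W) (cs' : CoxeterSystem M' W)
    (h : ∀ w : W, cs.IsReflection w ↔ cs'.IsReflection w) :
    Nat.card B = Nat.card B' :=
  le_antisymm (card_le_main cs cs' fun w hw => (h w).mpr hw)
    (card_le_main cs' cs fun w hw => (h w).mp hw)
end

section
/- Let M be the 4×4 Coxeter matrix on generators a,b,c,d with m(a,b) = 2, m(b,c) = 3, m(c,d) = 2, and m(a,c) = m(a,d) = m(b,d) = ∞ (the path diagram with edge labels 2, 3, 2), and let N be the 4×4 Coxeter matrix on generators a',b',c',d' with m(b',a') = 2, m(b',c') = 2, m(b',d') = 3, and m(a',c') = m(a',d') = m(c',d') = ∞ (the star diagram with center b' and edge labels 2, 2, 3). Then the Coxeter group defined by M is isomorphic to the Coxeter group defined by N. -/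
/-!
In Mathlib's `CoxeterMatrix`, the entry `M i j : ℕ` is the order of `s i * s j`,
with `0` encoding the order `∞`.
-/

/-- The Coxeter matrix of the path diagram `a — b — c — d` with edge labels `2`, `3`, `2`
(all non-edges have label `∞`, encoded by `0`). -/
def pathMatrix : CoxeterMatrix (Fin 4) where
  M := !![1, 2, 0, 0;
          2, 1, 3, 0;
          0, 3, 1, 2;
          0, 0, 2, 1]
  off_diagonal := by intro i i'; fin_cases i <;> fin_cases i' <;> simp

/-- The Coxeter matrix of the star diagram with center `b'` and edges `b'—a'`, `b'—c'`, `b'—d'`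
labeled `2`, `2`, `3` (all non-edges have label `∞`, encoded by `0`); the generators are
ordered `a', b', c', d'`. -/
def starMatrix : CoxeterMatrix (Fin 4) where
  M := !![1, 2, 0, 0;
          2, 1, 2, 3;
          0, 2, 1, 0;
          0, 3, 0, 1]
  off_diagonal := by intro i i'; fin_cases i <;> fin_cases i' <;> simp

section Abstract

variable {G : Type*} [Group G]

theorem aux_comm {x y : G} (hx : x * x = 1) (hy : y * y = 1)
    (h : (x * y) ^ 2 = 1) : x * y = y * x := by
  have h' : (x * y) * (x * y) = 1 := by rw [← sq]; exact h
  have := eq_inv_of_mul_eq_one_left h'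
  rw [this, mul_inv_rev, inv_eq_of_mul_eq_one_right hx, inv_eq_of_mul_eq_one_right hy]

theorem aux_braid {x y : G} (hx : x * x = 1) (hy : y * y = 1)
    (h : (x * y) ^ 3 = 1) : x * y * x = y * x * y := by
  have h' : (x * y * x) * (y * x * y) = 1 := by
    calc (x * y * x) * (y * x * y) = (x * y) ^ 3 := by simp [pow_succ, mul_assoc]
    _ = 1 := h
  have := eq_inv_of_mul_eq_one_left h'
  rw [this, mul_inv_rev, mul_inv_rev, inv_eq_of_mul_eq_one_right hx,
    inv_eq_of_mul_eq_one_right hy, mul_assoc]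

theorem aux_sandwich {w : G} (hw : w * w = 1) (x : G) : w * (w * x * w) * w = x := by
  have h : w * (w * x * w) * w = (w * w) * x * (w * w) := by group
  rw [h, hw, one_mul, mul_one]

theorem aux_liftable_star {a b c d : G}
    (ha2 : a * a = 1) (hb2 : b * b = 1) (hc2 : c * c = 1) (hd2 : d * d = 1)
    (hab : (a * b) ^ 2 = 1) (hbc : (b * c) ^ 3 = 1) (hcd : (c * d) ^ 2 = 1) :
    starMatrix.IsLiftable ![a, b, (b * c * b) * d * (b * c * b), c] := by
  have haL : ∀ x : G, a * (a * x) = x := fun x => by rw [← mul_assoc, ha2, one_mul]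
  have hbL : ∀ x : G, b * (b * x) = x := fun x => by rw [← mul_assoc, hb2, one_mul]
  have hcL : ∀ x : G, c * (c * x) = x := fun x => by rw [← mul_assoc, hc2, one_mul]
  have hdL : ∀ x : G, d * (d * x) = x := fun x => by rw [← mul_assoc, hd2, one_mul]
  have habL : ∀ x : G, b * (a * x) = a * (b * x) := fun x => by
    rw [← mul_assoc, ← aux_comm ha2 hb2 hab, mul_assoc]
  have hdcL : ∀ x : G, d * (c * x) = c * (d * x) := fun x => by
    rw [← mul_assoc, ← aux_comm hc2 hd2 hcd, mul_assoc]
  have hbrP : ∀ x : G, b * (c * (b * x)) = c * (b * (c * x)) := fun x => by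
    calc b * (c * (b * x)) = (b * c * b) * x := by simp [mul_assoc]
    _ = (c * b * c) * x := by rw [aux_braid hb2 hc2 hbc]
    _ = c * (b * (c * x)) := by simp [mul_assoc]
  intro i j
  fin_cases i <;> fin_cases j <;>
    simp [starMatrix, Matrix.vecHead, Matrix.vecTail, pow_succ, mul_assoc,
      haL, hbL, hcL, hdL, habL, hdcL, hbrP, ha2, hb2, hc2, hd2]

theorem aux_liftable_path {a' b' c' d' : G}
    (ha2 : a' * a' = 1) (hb2 : b' * b' = 1) (hc2 : c' * c' = 1) (hd2 : d' * d' = 1)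
    (hab : (a' * b') ^ 2 = 1) (hbc : (b' * c') ^ 2 = 1) (hbd : (b' * d') ^ 3 = 1) :
    pathMatrix.IsLiftable ![a', b', d', (b' * d' * b') * c' * (b' * d' * b')] := by
  have haL : ∀ x : G, a' * (a' * x) = x := fun x => by rw [← mul_assoc, ha2, one_mul]
  have hbL : ∀ x : G, b' * (b' * x) = x := fun x => by rw [← mul_assoc, hb2, one_mul]
  have hcL : ∀ x : G, c' * (c' * x) = x := fun x => by rw [← mul_assoc, hc2, one_mul]
  have hdL : ∀ x : G, d' * (d' * x) = x := fun x => by rw [← mul_assoc, hd2, one_mul]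
  have habL : ∀ x : G, b' * (a' * x) = a' * (b' * x) := fun x => by
    rw [← mul_assoc, ← aux_comm ha2 hb2 hab, mul_assoc]
  have hcbL : ∀ x : G, c' * (b' * x) = b' * (c' * x) := fun x => by
    rw [← mul_assoc, ← aux_comm hb2 hc2 hbc, mul_assoc]
  have hbrS : ∀ x : G, b' * (d' * (b' * x)) = d' * (b' * (d' * x)) := fun x => by
    calc b' * (d' * (b' * x)) = (b' * d' * b') * x := by simp [mul_assoc]
    _ = (d' * b' * d') * x := by rw [aux_braid hb2 hd2 hbd]
    _ = d' * (b' * (d' * x)) := by simp [mul_assoc]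
  intro i j
  fin_cases i <;> fin_cases j <;>
    simp [pathMatrix, Matrix.vecHead, Matrix.vecTail, pow_succ, mul_assoc,
      haL, hbL, hcL, hdL, habL, hcbL, hbrS, ha2, hb2, hc2, hd2]

theorem aux_ww {b c : G} (hb2 : b * b = 1) (hc2 : c * c = 1) :
    (b * c * b) * (b * c * b) = 1 := by
  have hbL : ∀ x : G, b * (b * x) = x := fun x => by rw [← mul_assoc, hb2, one_mul]
  have hcL : ∀ x : G, c * (c * x) = x := fun x => by rw [← mul_assoc, hc2, one_mul]
  calc (b * c * b) * (b * c * b) = b * (c * (b * (b * (c * b)))) := by simp [mul_assoc]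
  _ = 1 := by rw [hbL, hcL, hb2]

theorem aux_regroup1 {b c d : G} :
    (b * d * b) * c * (b * d * b) = b * (d * (b * (c * (b * (d * b))))) := by
  simp [mul_assoc]

theorem aux_regroup2 {b c d : G} :
    b * (c * (b * ((b * c * b) * d * (b * c * b) * (b * (c * b))))) =
      (b * c * b) * ((b * c * b) * d * (b * c * b)) * (b * c * b) := by
  simp [mul_assoc]

end Abstract

/-- The Coxeter group of the path diagram with edge labels `2`, `3`, `2` is isomorphic to the
Coxeter group of the star diagram with edge labels `2`, `2`, `3`. -/
theorem pathMatrix_group_iso_starMatrix_group :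
    Nonempty (pathMatrix.Group ≃* starMatrix.Group) := by
  classical
  let csP := pathMatrix.toCoxeterSystem
  let csS := starMatrix.toCoxeterSystem
  have hf := aux_liftable_star (csP.simple_mul_simple_self 0) (csP.simple_mul_simple_self 1)
    (csP.simple_mul_simple_self 2) (csP.simple_mul_simple_self 3)
    (by simpa [pathMatrix] using csP.simple_mul_simple_pow 0 1)
    (by simpa [pathMatrix] using csP.simple_mul_simple_pow 1 2)
    (by simpa [pathMatrix] using csP.simple_mul_simple_pow 2 3)
  have hg := aux_liftable_path (csS.simple_mul_simple_self 0) (csS.simple_mul_simple_self 1)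
    (csS.simple_mul_simple_self 2) (csS.simple_mul_simple_self 3)
    (by simpa [starMatrix] using csS.simple_mul_simple_pow 0 1)
    (by simpa [starMatrix] using csS.simple_mul_simple_pow 1 2)
    (by simpa [starMatrix] using csS.simple_mul_simple_pow 1 3)
  set ψ := csS.lift ⟨![csP.simple 0, csP.simple 1,
      (csP.simple 1 * csP.simple 2 * csP.simple 1) * csP.simple 3 *
        (csP.simple 1 * csP.simple 2 * csP.simple 1), csP.simple 2], hf⟩ with hψ_def
  set φ := csP.lift ⟨![csS.simple 0, csS.simple 1, csS.simple 3,
      (csS.simple 1 * csS.simple 3 * csS.simple 1) * csS.simple 2 *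
        (csS.simple 1 * csS.simple 3 * csS.simple 1)], hg⟩ with hφ_def
  have hφa : φ (csP.simple 0) = csS.simple 0 := csP.lift_apply_simple hg 0
  have hφb : φ (csP.simple 1) = csS.simple 1 := csP.lift_apply_simple hg 1
  have hφc : φ (csP.simple 2) = csS.simple 3 := csP.lift_apply_simple hg 2
  have hφd : φ (csP.simple 3) = (csS.simple 1 * csS.simple 3 * csS.simple 1) * csS.simple 2 *
      (csS.simple 1 * csS.simple 3 * csS.simple 1) := csP.lift_apply_simple hg 3
  have hψa : ψ (csS.simple 0) = csP.simple 0 := csS.lift_apply_simple hf 0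
  have hψb : ψ (csS.simple 1) = csP.simple 1 := csS.lift_apply_simple hf 1
  have hψc : ψ (csS.simple 2) = (csP.simple 1 * csP.simple 2 * csP.simple 1) * csP.simple 3 *
      (csP.simple 1 * csP.simple 2 * csP.simple 1) := csS.lift_apply_simple hf 2
  have hψd : ψ (csS.simple 3) = csP.simple 2 := csS.lift_apply_simple hf 3
  have hwP := aux_ww (csP.simple_mul_simple_self 1) (csP.simple_mul_simple_self 2)
  have hwS := aux_ww (csS.simple_mul_simple_self 1) (csS.simple_mul_simple_self 3)
  have h1 : ψ.comp φ = MonoidHom.id _ := by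
    apply csP.ext_simple
    intro i
    rw [MonoidHom.comp_apply, MonoidHom.id_apply]
    fin_cases i <;> beta_reduce <;>
      simp only [Fin.zero_eta, Fin.mk_one, show (⟨2, by omega⟩ : Fin 4) = 2 from rfl,
        show (⟨3, by omega⟩ : Fin 4) = 3 from rfl]
    · rw [hφa, hψa]
    · rw [hφb, hψb]
    · rw [hφc, hψd]
    · rw [hφd, aux_regroup1]
      simp only [map_mul]
      rw [hψb, hψc, hψd, aux_regroup2]
      exact aux_sandwich hwP (csP.simple 3)
  have h2 : φ.comp ψ = MonoidHom.id _ := by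
    apply csS.ext_simple
    intro i
    rw [MonoidHom.comp_apply, MonoidHom.id_apply]
    fin_cases i <;> beta_reduce <;>
      simp only [Fin.zero_eta, Fin.mk_one, show (⟨2, by omega⟩ : Fin 4) = 2 from rfl,
        show (⟨3, by omega⟩ : Fin 4) = 3 from rfl]
    · rw [hψa, hφa]
    · rw [hψb, hφb]
    · rw [hψc, aux_regroup1]
      simp only [map_mul]
      rw [hφb, hφc, hφd, aux_regroup2]
      exact aux_sandwich hwS (csS.simple 2)
    · rw [hψd, hφc]
  exact ⟨MonoidHom.toMulEquiv φ ψ h1 h2⟩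
end
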